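/- For all integers 1 ≤ j ≤ m, the rational number 2^{m−j}·j!·b_{j,m}/m! is congruent modulo 4 in ℤ_(2) to C(j, m−j) + 2·c_{j,m}, where c_{j,m} = C(j, m−j−1) if j is even and c_{j,m} = C(j, m−j−2) if j is odd, with the convention C(a, b) = 0 when b < 0 or a < b. -/

import Mathlib

/-- The polynomial `(x+1)·x·(x−1)⋯(x−m+2)` (the product of `m` consecutive
factors starting from `x+1`). -/
noncomputable def descPoly (m : ℕ) : Polynomial ℤ :=
  ∏ s ∈ Finset.range m, (Polynomial.X + Polynomial.C (1 - (s : ℤ)))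

/-- The coefficients `b_{j,m}` defined by the polynomial identity
`(x+1)·x·(x−1)⋯(x−m+2) = Σ_{j=1}^m b_{j,m} x^j`. -/
noncomputable def bcoef (j m : ℕ) : ℤ := (descPoly m).coeff j

/-- Value of `(x+1)·x·(x−1)⋯(x−m+2)` at an integer `x`. -/
def descVal (m : ℕ) (x : ℤ) : ℤ := ∏ s ∈ Finset.range m, (x + 1 - (s : ℤ))

/-- Auxiliary: `qAux m k x` is `q_k(x)` for `k ≤ m`, defined recursively by
`q_1(x) = x − 1` and, for `m ≥ 2`, by the identity
`(x+1)·x⋯(x−m+2) = Σ_{j=1}^m 2^{m−j} b_{j,m} q_j(x)` (using `b_{m,m} = 1`,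
i.e. `q_m(x) = (x+1)·x⋯(x−m+2) − Σ_{j=1}^{m−1} 2^{m−j} b_{j,m} q_j(x)`). -/
noncomputable def qAux : ℕ → ℕ → ℤ → ℤ
  | 0, _, _ => 0
  | m + 1, k, x =>
    if k = m + 1 then
      if m = 0 then x - 1
      else descVal (m + 1) x -
        ∑ j ∈ Finset.Icc 1 m, 2 ^ (m + 1 - j) * bcoef j (m + 1) * qAux m j x
    else qAux m k x

/-- `qval m x = q_m(x)`, the value at `x` of the integer polynomial `q_m`. -/
noncomputable def qval (m : ℕ) (x : ℤ) : ℤ := qAux m m x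

/-- Congruence mod 4 in `ℤ_(2)`:  `ν(r − s) ≥ 2`, with `ν(0) = ∞` (i.e. `r = s` allowed). -/
def cong4 (r s : ℚ) : Prop := r = s ∨ 2 ≤ padicValRat 2 (r - s)

/-- `c_{j,m} = C(j, m−j−1)` if `j` is even and `C(j, m−j−2)` if `j` is odd,
with the convention that the binomial coefficient is `0` for a negative
lower index (hence the guards, since `m − j − 1` is truncated subtraction). -/
def ccoef (j m : ℕ) : ℕ :=
  if Even j then (if j + 1 ≤ m then Nat.choose j (m - j - 1) else 0)
  else (if j + 2 ≤ m then Nat.choose j (m - j - 2) else 0)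


/-- `x` is a 2-adic integer. -/
def IsI (x : ℚ) : Prop := ∃ a b : ℤ, ¬ (2:ℤ) ∣ b ∧ x * (b:ℚ) = (a:ℚ)

/-- `x ≡ 0 (mod 4)` 2-adically. -/
def D4 (x : ℚ) : Prop := ∃ y : ℚ, IsI y ∧ x = 4 * y

lemma isI_intCast (n : ℤ) : IsI (n : ℚ) := ⟨n, 1, by decide, by norm_num⟩

lemma isI_zero : IsI 0 := by simpa using isI_intCast 0

lemma isI_add {x y : ℚ} (hx : IsI x) (hy : IsI y) : IsI (x + y) := by
  obtain ⟨a, b, hb, hab⟩ := hx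
  obtain ⟨c, d, hd, hcd⟩ := hy
  refine ⟨a * d + c * b, b * d, ?_, ?_⟩
  · intro h
    rcases (Int.prime_two.dvd_mul.mp h) with h' | h' <;> simp_all <;> omega
  · push_cast
    calc (x + y) * ((b:ℚ) * d) = (x * b) * d + (y * d) * b := by ring
    _ = (a:ℚ) * d + (c:ℚ) * b := by rw [hab, hcd]

lemma isI_mul {x y : ℚ} (hx : IsI x) (hy : IsI y) : IsI (x * y) := by
  obtain ⟨a, b, hb, hab⟩ := hx
  obtain ⟨c, d, hd, hcd⟩ := hy
  refine ⟨a * c, b * d, ?_, ?_⟩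
  · intro h
    rcases (Int.prime_two.dvd_mul.mp h) with h' | h' <;> simp_all <;> omega
  · push_cast
    calc (x * y) * ((b:ℚ) * d) = (x * b) * (y * d) := by ring
    _ = (a:ℚ) * c := by rw [hab, hcd]

lemma isI_neg {x : ℚ} (hx : IsI x) : IsI (-x) := by
  have := isI_mul (isI_intCast (-1)) hx
  simpa using this

lemma d4_intCast {n : ℤ} (h : (4:ℤ) ∣ n) : D4 (n : ℚ) := by
  obtain ⟨k, rfl⟩ := h
  exact ⟨(k : ℚ), isI_intCast k, by push_cast; ring⟩

lemma d4_zero : D4 0 := ⟨0, isI_zero, by ring⟩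

lemma d4_add {x y : ℚ} (hx : D4 x) (hy : D4 y) : D4 (x + y) := by
  obtain ⟨a, ha, rfl⟩ := hx
  obtain ⟨b, hb, rfl⟩ := hy
  exact ⟨a + b, isI_add ha hb, by ring⟩

lemma d4_neg {x : ℚ} (hx : D4 x) : D4 (-x) := by
  obtain ⟨a, ha, rfl⟩ := hx
  exact ⟨-a, isI_neg ha, by ring⟩

lemma d4_sub {x y : ℚ} (hx : D4 x) (hy : D4 y) : D4 (x - y) := by
  simpa [sub_eq_add_neg] using d4_add hx (d4_neg hy)

lemma d4_mul_isI {x y : ℚ} (hx : D4 x) (hy : IsI y) : D4 (x * y) := by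
  obtain ⟨a, ha, rfl⟩ := hx
  exact ⟨a * y, isI_mul ha hy, by ring⟩

lemma isI_of_d4 {x : ℚ} (hx : D4 x) : IsI x := by
  obtain ⟨a, ha, rfl⟩ := hx
  simpa using isI_mul (isI_intCast 4) ha

lemma d4_sum {α : Type*} (s : Finset α) (f : α → ℚ) (h : ∀ i ∈ s, D4 (f i)) :
    D4 (∑ i ∈ s, f i) :=
  Finset.sum_induction f D4 (fun _ _ => d4_add) d4_zero h

lemma padicValRat_nonneg_of_isI {x : ℚ} (hx : IsI x) (hx0 : x ≠ 0) :
    0 ≤ padicValRat 2 x := by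
  obtain ⟨a, b, hb, hab⟩ := hx
  have hb0 : (b:ℚ) ≠ 0 := by
    intro h; apply hb; simp [show b = 0 by exact_mod_cast h]
  have ha0 : (a:ℚ) ≠ 0 := by
    rw [← hab]; exact mul_ne_zero hx0 hb0
  have hmul := padicValRat.mul (p := 2) hx0 hb0
  rw [hab] at hmul
  have hvb : padicValRat 2 (b:ℚ) = 0 := by
    rw [padicValRat.of_int, padicValInt.eq_zero_of_not_dvd (by exact_mod_cast hb)]
    norm_num
  have hva : 0 ≤ padicValRat 2 (a:ℚ) := by
    rw [padicValRat.of_int]; positivity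
  omega


/-- Binomial coefficient with integer lower index (0 for negative). -/
def chiZ (j : ℕ) (t : ℤ) : ℤ := if 0 ≤ t then (j.choose t.toNat : ℤ) else 0

/-- `(-1)^t` for an integer `t`. -/
def eps (t : ℤ) : ℤ := if Even t then 1 else -1

lemma chiZ_neg {j : ℕ} {t : ℤ} (h : t < 0) : chiZ j t = 0 := by
  simp [chiZ, not_le.mpr h]

lemma chiZ_ofNat (j n : ℕ) : chiZ j (n : ℤ) = (j.choose n : ℤ) := by
  simp [chiZ]

lemma chiZ_pascal (j : ℕ) (t : ℤ) : chiZ (j+1) t = chiZ j t + chiZ j (t-1) := by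
  rcases lt_trichotomy t 0 with h | h | h
  · rw [chiZ_neg h, chiZ_neg h, chiZ_neg (by omega)]; ring
  · subst h; simp [chiZ]
  · obtain ⟨n, rfl⟩ : ∃ n : ℕ, t = ((n:ℤ) + 1) := ⟨(t-1).toNat, by omega⟩
    have h1 : ((n:ℤ) + 1) = ((n+1 : ℕ) : ℤ) := by push_cast; ring
    rw [h1]
    have h2 : ((n+1:ℕ):ℤ) - 1 = (n : ℤ) := by push_cast; ring
    rw [h2, chiZ_ofNat, chiZ_ofNat, chiZ_ofNat, Nat.choose_succ_succ]
    push_cast; ring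

lemma eps_even {t : ℤ} (h : Even t) : eps t = 1 := by simp [eps, h]
lemma eps_odd {t : ℤ} (h : Odd t) : eps t = -1 := by
  simp [eps, Int.not_even_iff_odd.mpr h]

lemma eps_add_one (t : ℤ) : eps (t + 1) = - eps t := by
  rcases Int.even_or_odd t with h | h
  · rw [eps_even h, eps_odd h.add_one]
  · rw [eps_odd h, eps_even h.add_one]; norm_num

lemma eps_sub_one (t : ℤ) : eps (t - 1) = - eps t := by
  have h := eps_add_one (t - 1)
  rw [sub_add_cancel] at h
  linarith

lemma natCast_zmod2_even {n : ℕ} (h : Even n) : (n : ZMod 2) = 0 := by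
  obtain ⟨b, rfl⟩ := h
  push_cast
  ring_nf
  rw [show ((2:ZMod 2)) = 0 from rfl]
  ring

lemma natCast_zmod2_odd {n : ℕ} (h : Odd n) : (n : ZMod 2) = 1 := by
  obtain ⟨b, rfl⟩ := h
  push_cast
  rw [show ((2:ZMod 2)) = 0 from rfl]
  ring

lemma nat_choose_even_odd {j n : ℕ} (hj : Even j) (hn : Odd n) : 2 ∣ j.choose n := by
  rcases Nat.lt_or_ge j n with h | h
  · simp [Nat.choose_eq_zero_of_lt h]
  · obtain ⟨k, rfl⟩ : ∃ k, n = k + 1 := ⟨n - 1, by rcases hn with ⟨a, ha⟩; omega⟩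
    have hid := Nat.choose_succ_right_eq j k
    have h2 : 2 ∣ j.choose (k+1) * (k+1) := by
      rw [hid]
      have hjk : 2 ∣ (j - k) := by
        rcases hj with ⟨a, ha⟩; rcases hn with ⟨b, hb⟩
        exact ⟨a - b, by omega⟩
      exact Dvd.dvd.mul_left hjk _
    rcases (Nat.prime_two.dvd_mul.mp h2) with h' | h'
    · exact h'
    · exfalso; rcases hn with ⟨a, ha⟩; omega

lemma chiZ_even_odd {j : ℕ} {t : ℤ} (hj : Even j) (ht : Odd t) : 2 ∣ chiZ j t := by
  rcases lt_or_ge t 0 with h | h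
  · simp [chiZ_neg h]
  · obtain ⟨n, rfl⟩ : ∃ n : ℕ, t = (n:ℤ) := ⟨t.toNat, by omega⟩
    rw [chiZ_ofNat]
    have hn : Odd n := by rcases ht with ⟨a, ha⟩; exact ⟨a.toNat, by omega⟩
    exact_mod_cast Int.natCast_dvd_natCast.mpr (nat_choose_even_odd hj hn)

lemma nat_choose_odd_step {j n : ℕ} (hj : Odd j) (hn : Even n) :
    Nat.choose j (n+1) ≡ Nat.choose j n [MOD 2] := by
  rcases Nat.lt_or_ge j n with h | h
  · rw [Nat.choose_eq_zero_of_lt h, Nat.choose_eq_zero_of_lt (by omega)]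
  · have hjn : j ≠ n := by rintro rfl; rcases hj with ⟨a, ha⟩; rcases hn with ⟨b, hb⟩; omega
    have h' : n < j := lt_of_le_of_ne h (Ne.symm hjn)
    have hid := Nat.choose_succ_right_eq j n
    have e1 : (n + 1) ≡ 1 [MOD 2] := by
      rcases hn with ⟨b, hb⟩; unfold Nat.ModEq; omega
    have e2 : (j - n) ≡ 1 [MOD 2] := by
      rcases hj with ⟨a, ha⟩; rcases hn with ⟨b, hb⟩; unfold Nat.ModEq; omega
    calc j.choose (n+1) = j.choose (n+1) * 1 := by ring
    _ ≡ j.choose (n+1) * (n+1) [MOD 2] := (Nat.ModEq.mul_left _ e1).symm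
    _ = j.choose n * (j - n) := hid
    _ ≡ j.choose n * 1 [MOD 2] := Nat.ModEq.mul_left _ e2
    _ = j.choose n := by ring

lemma chiZ_odd_step {j : ℕ} {t : ℤ} (hj : Odd j) (ht : Even t) :
    2 ∣ (chiZ j (t+1) - chiZ j t) := by
  rcases lt_or_ge t 0 with h | h
  · have h1 : t + 1 < 0 := by rcases ht with ⟨b, hb⟩; omega
    simp [chiZ_neg h, chiZ_neg h1]
  · obtain ⟨n, rfl⟩ : ∃ n : ℕ, t = (n:ℤ) := ⟨t.toNat, by omega⟩
    have e1 : (n:ℤ) + 1 = ((n+1 : ℕ) : ℤ) := by push_cast; ring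
    rw [e1, chiZ_ofNat, chiZ_ofNat]
    have hn : Even n := by rcases ht with ⟨b, hb⟩; exact ⟨b.toNat, by omega⟩
    have := (Nat.modEq_iff_dvd.mp (nat_choose_odd_step hj hn))
    omega

/-- The mod-4 approximation of `2^{t-j}·[x^t] log(1+x)^j`. -/
def tgtZ (j : ℕ) (t : ℤ) : ℤ :=
  eps (t - j) * chiZ j (t - j) + 2 * j * chiZ (j-1) (t - j - 3)

lemma step_int' (j : ℕ) (s : ℤ) :
    (4:ℤ) ∣ ((eps s * chiZ j s + 2*j*chiZ (j-1) (s-3))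
           - (eps (s-1) * chiZ j (s-1) + 2*j*chiZ (j-1) (s-4))
           - 2*(eps (s-3) * chiZ j (s-3) + 2*j*chiZ (j-1) (s-6))
           - (eps s * chiZ (j+1) s + 2*((j:ℤ)+1)*chiZ j (s-3))) := by
  have hp := chiZ_pascal j s
  have he1 := eps_sub_one s
  have hW : (2:ℤ) ∣ ((j:ℤ)*chiZ (j-1) (s-3) - (j:ℤ)*chiZ (j-1) (s-4)
      - eps (s-3) * chiZ j (s-3) - ((j:ℤ)+1)*chiZ j (s-3)) := by
    rcases j with _ | i
    · simp only [Nat.cast_zero, zero_mul, zero_sub]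
      rcases Int.even_or_odd (s-3) with h | h
      · rw [eps_even h]
        exact ⟨-chiZ 0 (s-3), by push_cast; ring⟩
      · rw [eps_odd h]
        exact ⟨0, by push_cast; ring⟩
    · have hp2 := chiZ_pascal i (s-3)
      rw [show s - 3 - 1 = s - 4 by ring] at hp2
      have hi : (i+1) - 1 = i := by omega
      rw [hi]
      rcases Int.even_or_odd (s-3) with h | h
      · rw [eps_even h]
        exact ⟨-chiZ i (s-3) - ((i:ℤ)+2)*chiZ i (s-4),
          by push_cast; linear_combination (-(i:ℤ) - 3) * hp2⟩
      · rw [eps_odd h]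
        exact ⟨-((i:ℤ)+1) * chiZ i (s-4),
          by push_cast; linear_combination (-(i:ℤ) - 1) * hp2⟩
  obtain ⟨w, hw⟩ := hW
  exact ⟨w - (j:ℤ) * chiZ (j-1) (s-6),
    by linear_combination (-(eps s)) * hp - (chiZ j (s-1)) * he1 + 2 * hw⟩

lemma step_int (j : ℕ) (t : ℤ) :
    (4:ℤ) ∣ (tgtZ j (t-1) - tgtZ j (t-2) - 2 * tgtZ j (t-4) - tgtZ (j+1) t) := by
  unfold tgtZ
  have h1 : t - 1 - (j:ℤ) = (t - (j:ℤ) - 1) := by ring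
  have h2 : t - 2 - (j:ℤ) = (t - (j:ℤ) - 1) - 1 := by ring
  have h3 : t - 4 - (j:ℤ) = (t - (j:ℤ) - 1) - 3 := by ring
  have h4 : t - ((j+1:ℕ):ℤ) = (t - (j:ℤ) - 1) := by push_cast; ring
  have h5 : (j + 1) - 1 = j := by omega
  rw [h1, h2, h3, h4, h5]
  have := step_int' j (t - (j:ℤ) - 1)
  convert this using 2
  push_cast
  ring_nf
  push_cast; ring


lemma ccoef_cast (j m : ℕ) :
    ((ccoef j m : ℤ)) = if Even j then chiZ j ((m:ℤ)-j-1) else chiZ j ((m:ℤ)-j-2) := by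
  by_cases hj : Even j
  · rcases le_or_gt (j+1) m with h | h
    · have h0 : (0:ℤ) ≤ (m:ℤ)-j-1 := by omega
      have h1 : ((m:ℤ)-j-1).toNat = m - j - 1 := by omega
      simp [ccoef, hj, h, chiZ, h0, h1]
      intro h'; omega
    · have h0 : ¬ ((0:ℤ) ≤ (m:ℤ)-j-1) := by omega
      simp [ccoef, hj, chiZ, h0]
      rw [if_neg (by omega), if_neg (by omega)]
  · rcases le_or_gt (j+2) m with h | h
    · have h0 : (0:ℤ) ≤ (m:ℤ)-j-2 := by omega
      have h1 : ((m:ℤ)-j-2).toNat = m - j - 2 := by omega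
      simp [ccoef, hj, h, chiZ, h0, h1]
      intro h'; omega
    · have h0 : ¬ ((0:ℤ) ≤ (m:ℤ)-j-2) := by omega
      simp [ccoef, hj, chiZ, h0]
      rw [if_neg (by omega), if_neg (by omega)]

lemma choose_cast {j m : ℕ} (h : j ≤ m) :
    (Nat.choose j (m-j) : ℤ) = chiZ j ((m:ℤ)-j) := by
  have e : (m:ℤ)-j = ((m-j:ℕ):ℤ) := by omega
  rw [e, chiZ_ofNat]

lemma final_int (j m : ℕ) (hj1 : 1 ≤ j) (hjm : j ≤ m) :
    (4:ℤ) ∣ (tgtZ j m + 2 * tgtZ j ((m:ℤ)-1)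
      - (Nat.choose j (m-j) : ℤ) - 2 * (ccoef j m : ℤ)) := by
  rw [choose_cast hjm, ccoef_cast]
  unfold tgtZ
  set k : ℤ := (m:ℤ) - j with hkdef
  have e1 : (m:ℤ) - j - 3 = k - 3 := by omega
  have e2 : (m:ℤ) - 1 - j = k - 1 := by omega
  rw [e1, e2, show k - 1 - 3 = k - 4 by ring]
  rcases Nat.even_or_odd j with hj | hj
  · -- j even
    rw [if_pos hj]
    obtain ⟨u, hu⟩ := hj
    have hju : (j:ℤ) = 2*u := by omega
    rcases Int.even_or_odd k with hk | hk
    · rw [eps_even hk, eps_odd (by rcases hk with ⟨b, hb⟩; exact ⟨b-1, by omega⟩)]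
      exact ⟨(u:ℤ) * chiZ (j-1) (k-3) + (j:ℤ) * chiZ (j-1) (k-4) - chiZ j (k-1),
        by linear_combination (2 * chiZ (j-1) (k-3)) * hju⟩
    · rw [eps_odd hk, eps_even (by rcases hk with ⟨b, hb⟩; exact ⟨b, by omega⟩)]
      obtain ⟨v, hv⟩ := chiZ_even_odd (⟨u, hu⟩ : Even j) hk
      exact ⟨-v + (u:ℤ) * chiZ (j-1) (k-3) + (j:ℤ) * chiZ (j-1) (k-4),
        by linear_combination (-2) * hv + (2 * chiZ (j-1) (k-3)) * hju⟩
  · -- j odd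
    rw [if_neg (by simpa [Nat.not_even_iff_odd] using hj)]
    obtain ⟨i, rfl⟩ : ∃ i, j = i + 1 := ⟨j - 1, by omega⟩
    have hi : (i + 1) - 1 = i := by omega
    rw [hi]
    have hie : Even i := by rcases hj with ⟨a, ha⟩; exact ⟨a, by omega⟩
    obtain ⟨u, hu⟩ := hie
    have hiu : (i:ℤ) = 2*u := by omega
    rcases Int.even_or_odd k with hk | hk
    · -- k even
      rw [eps_even hk, eps_odd (by rcases hk with ⟨b, hb⟩; exact ⟨b-1, by omega⟩)]
      obtain ⟨w, hw⟩ := chiZ_odd_step hj (by rcases hk with ⟨b, hb⟩; exact ⟨b-1, by omega⟩ : Even (k-2))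
      rw [show k - 2 + 1 = k - 1 by ring] at hw
      obtain ⟨v, hv⟩ := chiZ_even_odd (⟨u, hu⟩ : Even i)
        (by rcases hk with ⟨b, hb⟩; exact ⟨b-2, by omega⟩ : Odd (k-3))
      exact ⟨((i:ℤ)+1) * v - w - chiZ (i+1) (k-2) + ((i:ℤ)+1) * chiZ i (k-4),
        by push_cast; linear_combination (2*((i:ℤ)+1)) * hv - 2 * hw⟩
    · -- k odd
      rw [eps_odd hk, eps_even (by rcases hk with ⟨b, hb⟩; exact ⟨b, by omega⟩)]
      obtain ⟨w, hw⟩ := chiZ_odd_step hj (by rcases hk with ⟨b, hb⟩; exact ⟨b, by omega⟩ : Even (k-1))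
      rw [show k - 1 + 1 = k by ring] at hw
      have hp := chiZ_pascal i (k-2)
      rw [show k - 2 - 1 = k - 3 by ring] at hp
      obtain ⟨v, hv⟩ := chiZ_even_odd (⟨u, hu⟩ : Even i)
        (by rcases hk with ⟨b, hb⟩; exact ⟨b-1, by omega⟩ : Odd (k-2))
      exact ⟨(u:ℤ) * chiZ i (k-3) - w + ((i:ℤ)+1) * chiZ i (k-4) - v,
        by push_cast; linear_combination (-2) * hw - 2 * hp - 2 * hv + (2 * chiZ i (k-3)) * hiu⟩


open PowerSeries

/-- `log(1+x)` as a formal power series over `ℚ`. -/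
noncomputable def Lser : ℚ⟦X⟧ := PowerSeries.mk fun n => if n = 0 then 0 else (-1)^(n+1) / n

noncomputable def Acoef (j n : ℕ) : ℚ := PowerSeries.coeff n (Lser ^ j)

noncomputable def cf (j n : ℕ) : ℚ := PowerSeries.coeff n ((1 + X) * Lser ^ j)

lemma constantCoeff_Lser : constantCoeff Lser = 0 := by
  have : (coeff 0) Lser = 0 := by simp [Lser]
  rwa [PowerSeries.coeff_zero_eq_constantCoeff] at this

lemma hdL : (1 + X) * (PowerSeries.derivative ℚ Lser : ℚ⟦X⟧) = 1 := by
  ext n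
  rw [add_mul, one_mul, map_add]
  rcases n with _ | n
  · have h1 : (coeff 0) ((PowerSeries.derivative ℚ) Lser : ℚ⟦X⟧) = 1 := by
      rw [PowerSeries.coeff_derivative]; simp [Lser]
    have h2 : (coeff 0) (X * ((PowerSeries.derivative ℚ) Lser : ℚ⟦X⟧)) = 0 := by
      rw [PowerSeries.coeff_zero_eq_constantCoeff, map_mul, constantCoeff_X, zero_mul]
    rw [h1, h2, PowerSeries.coeff_one]
    norm_num
  · rw [PowerSeries.coeff_succ_X_mul, PowerSeries.coeff_derivative, PowerSeries.coeff_derivative,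
      PowerSeries.coeff_one]
    simp only [Lser, PowerSeries.coeff_mk]
    rw [if_neg (Nat.succ_ne_zero _), if_neg (Nat.succ_ne_zero _), if_neg (Nat.succ_ne_zero _)]
    have h1 : ((n:ℚ) + 1) ≠ 0 := by positivity
    have h2 : ((n:ℚ) + 1 + 1) ≠ 0 := by positivity
    push_cast
    field_simp
    ring

lemma coeff_X_mul_derivative (f : ℚ⟦X⟧) (n : ℕ) :
    PowerSeries.coeff n (X * (PowerSeries.derivative ℚ f : ℚ⟦X⟧)) = n * PowerSeries.coeff n f := by
  rcases n with _ | n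
  · rw [PowerSeries.coeff_zero_eq_constantCoeff, map_mul, constantCoeff_X]
    simp
  · rw [PowerSeries.coeff_succ_X_mul, PowerSeries.coeff_derivative]
    push_cast
    ring

lemma hODE (j m : ℕ) :
    ((m:ℚ)+1) * cf j (m+1) = (j:ℚ) * cf (j-1) m + (1 - (m:ℚ)) * cf j m := by
  rcases j with _ | i
  · have hcf : ∀ n, cf 0 n = PowerSeries.coeff n (1 + X) := by
      intro n; simp [cf]
    rcases m with _ | _ | m <;>
      simp [hcf, PowerSeries.coeff_one, PowerSeries.coeff_X, map_add] <;> push_cast <;> ring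
  · have hser : (1+X) * (PowerSeries.derivative ℚ ((1+X) * Lser^(i+1)) : ℚ⟦X⟧)
        = (((i+1:ℕ):ℚ⟦X⟧)) * ((1+X)*Lser^i) + (1+X)*Lser^(i+1) := by
      rw [Derivation.leibniz, Derivation.leibniz_pow]
      simp only [smul_eq_mul, nsmul_eq_mul, Nat.add_sub_cancel]
      have hd1 : (PowerSeries.derivative ℚ (1 + X) : ℚ⟦X⟧) = 1 := by
        rw [map_add]; simp
      rw [hd1]
      linear_combination (((i+1:ℕ):ℚ⟦X⟧)) * (Lser^i) * (1+X) * hdL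
    have hco := congrArg (PowerSeries.coeff m) hser
    rw [add_mul, one_mul, map_add, map_add, coeff_X_mul_derivative,
      PowerSeries.coeff_derivative] at hco
    rw [show (((i+1:ℕ):ℚ⟦X⟧)) = PowerSeries.C (((i+1:ℕ):ℚ)) from (map_natCast (PowerSeries.C) (i+1)).symm,
      PowerSeries.coeff_C_mul] at hco
    have : cf (i+1) (m+1) * ((m:ℚ)+1) + (m:ℚ) * cf (i+1) m
        = ((i+1:ℕ):ℚ) * cf i m + cf (i+1) m := hco
    have hii : (i + 1) - 1 = i := rfl
    rw [hii]
    push_cast at this ⊢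
    linarith

lemma cf_zero (j : ℕ) : cf j 0 = if j = 0 then 1 else 0 := by
  unfold cf
  rw [PowerSeries.coeff_zero_eq_constantCoeff, map_mul, map_pow, constantCoeff_Lser, map_add]
  rcases j with _ | i <;> simp

lemma bcoef_zero (j : ℕ) : bcoef j 0 = if j = 0 then 1 else 0 := by
  unfold bcoef descPoly
  simp [Polynomial.coeff_one]

lemma descPoly_succ (m : ℕ) :
    descPoly (m+1) = descPoly m * (Polynomial.X + Polynomial.C (1 - (m:ℤ))) := by
  unfold descPoly
  rw [Finset.prod_range_succ]

lemma bcoef_succ_zero (m : ℕ) : bcoef 0 (m+1) = (1 - (m:ℤ)) * bcoef 0 m := by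
  unfold bcoef
  rw [descPoly_succ, mul_add, Polynomial.coeff_add, Polynomial.coeff_mul_X_zero,
    Polynomial.coeff_mul_C]
  ring

lemma bcoef_succ_succ (i m : ℕ) :
    bcoef (i+1) (m+1) = bcoef i m + (1 - (m:ℤ)) * bcoef (i+1) m := by
  unfold bcoef
  rw [descPoly_succ, mul_add, Polynomial.coeff_add, Polynomial.coeff_mul_X,
    Polynomial.coeff_mul_C]
  ring

lemma master : ∀ m j, (j.factorial : ℚ) * (bcoef j m : ℚ) = (m.factorial : ℚ) * cf j m := by
  intro m
  induction m with
  | zero =>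
    intro j
    rw [bcoef_zero, cf_zero]
    rcases j with _ | i <;> simp
  | succ m ih =>
    intro j
    have hode := hODE j m
    have hfac : ((m+1).factorial : ℚ) = ((m:ℚ)+1) * (m.factorial : ℚ) := by
      rw [Nat.factorial_succ]; push_cast; ring
    rcases j with _ | i
    · rw [bcoef_succ_zero, hfac]
      have h0 := ih 0
      push_cast at h0 ⊢
      simp only [Nat.zero_sub] at hode
      -- hode : (m+1) * cf 0 (m+1) = 0 * cf (0-1) m + (1-m) * cf 0 m
      push_cast at hode
      simp only [Nat.factorial_zero, Nat.cast_one, one_mul] at h0 ⊢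
      linear_combination (1-(m:ℚ)) * h0 - (m.factorial:ℚ) * hode
    · rw [bcoef_succ_succ, hfac]
      have h1 := ih i
      have h2 := ih (i+1)
      have hfs : ((i+1).factorial : ℚ) = ((i:ℚ)+1) * (i.factorial : ℚ) := by
        rw [Nat.factorial_succ]; push_cast; ring
      have hii : (i + 1) - 1 = i := rfl
      rw [hii] at hode
      rw [hfs] at h2 ⊢
      push_cast at h1 h2 hode ⊢
      linear_combination ((i:ℚ)+1) * h1 + (1 - (m:ℚ)) * h2 - (m.factorial:ℚ) * hode

lemma Acoef_eq_zero {j n : ℕ} (h : n < j) : Acoef j n = 0 := by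
  have hX : (X : ℚ⟦X⟧) ∣ Lser := PowerSeries.X_dvd_iff.mpr constantCoeff_Lser
  have hXj : (X : ℚ⟦X⟧)^j ∣ Lser^j := pow_dvd_pow_of_dvd hX j
  exact PowerSeries.X_pow_dvd_iff.mp hXj n h

lemma Acoef_conv (j n : ℕ) :
    Acoef (j+1) n = ∑ k ∈ Finset.range (n+1), (PowerSeries.coeff k Lser) * Acoef j (n - k) := by
  unfold Acoef
  rw [pow_succ', PowerSeries.coeff_mul, Finset.Nat.sum_antidiagonal_eq_sum_range_succ_mk]

lemma cf_eq_Acoef (j m : ℕ) : cf j (m+1) = Acoef j (m+1) + Acoef j m := by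
  unfold cf Acoef
  rw [add_mul, one_mul, map_add, PowerSeries.coeff_succ_X_mul]

/-! ### Part 4: the 2-adic congruence by induction -/

noncomputable def hqc (k : ℕ) : ℚ := (-1:ℚ)^(k+1) * 2^(k-1) / k

noncomputable def rZ (j : ℕ) (t : ℤ) : ℚ :=
  if 0 ≤ t then (2:ℚ)^(t - j) * Acoef j t.toNat else 0

lemma rZ_neg {j : ℕ} {t : ℤ} (h : t < 0) : rZ j t = 0 := by
  simp [rZ, not_le.mpr h]

lemma rZ_ofNat (j n : ℕ) : rZ j (n:ℤ) = (2:ℚ)^((n:ℤ) - j) * Acoef j n := by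
  simp [rZ]

lemma hqc_one : hqc 1 = 1 := by norm_num [hqc]
lemma hqc_two : hqc 2 = -1 := by norm_num [hqc]
lemma hqc_four : hqc 4 = -2 := by norm_num [hqc]

lemma rZ_conv (j n : ℕ) :
    rZ (j+1) (n:ℤ) = ∑ k ∈ Finset.Icc 1 (n+4), hqc k * rZ j ((n:ℤ) - k) := by
  rw [rZ_ofNat, Acoef_conv, Finset.mul_sum]
  have hA : ∑ k ∈ Finset.Icc 1 (n+4), hqc k * rZ j ((n:ℤ) - k)
      = ∑ k ∈ Finset.Icc 1 n, hqc k * rZ j ((n:ℤ) - k) := by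
    refine (Finset.sum_subset ?_ ?_).symm
    · intro x hx
      simp only [Finset.mem_Icc] at hx ⊢
      omega
    · intro x hx hx'
      simp only [Finset.mem_Icc] at hx hx'
      have : ((n:ℤ) - x) < 0 := by omega
      rw [rZ_neg this, mul_zero]
  rw [hA]
  have hB : ∑ k ∈ Finset.range (n+1),
        (2:ℚ)^((n:ℤ) - (j+1:ℕ)) * (PowerSeries.coeff k Lser * Acoef j (n - k))
      = ∑ k ∈ Finset.Icc 1 n,
        (2:ℚ)^((n:ℤ) - (j+1:ℕ)) * (PowerSeries.coeff k Lser * Acoef j (n - k)) := by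
    rw [Finset.range_eq_Ico, Finset.sum_eq_sum_Ico_succ_bot (by omega)]
    have h0 : PowerSeries.coeff 0 Lser = 0 := by simp [Lser]
    rw [h0]
    rw [show Finset.Ico 1 (n+1) = Finset.Icc 1 n from rfl]
    ring
  rw [hB]
  apply Finset.sum_congr rfl
  intro k hk
  simp only [Finset.mem_Icc] at hk
  obtain ⟨hk1, hkn⟩ := hk
  have h0 : (0:ℤ) ≤ (n:ℤ) - k := by omega
  rw [rZ]
  rw [if_pos h0]
  have htn : ((n:ℤ) - k).toNat = n - k := by omega
  rw [htn]
  have hLk : PowerSeries.coeff k Lser = (-1:ℚ)^(k+1) / k := by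
    simp [Lser]
    intro h; omega
  rw [hLk]
  unfold hqc
  have hkq : (k:ℚ) ≠ 0 := by positivity
  have hpow : (2:ℚ)^((k-1:ℕ)) * (2:ℚ)^((n:ℤ) - k - j) = (2:ℚ)^((n:ℤ) - (j+1:ℕ)) := by
    have e1 : ((2:ℚ))^((k-1:ℕ)) = (2:ℚ)^(((k-1:ℕ):ℤ)) := by rw [zpow_natCast]
    rw [e1, ← zpow_add₀ (by norm_num : (2:ℚ) ≠ 0)]
    congr 1
    push_cast
    omega
  rw [← hpow]
  field_simp

lemma pow_ge_add_three (w : ℕ) (hw : 3 ≤ w) : w + 3 ≤ 2^w := by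
  induction w with
  | zero => omega
  | succ n ih =>
    rcases Nat.lt_or_ge n 3 with h | h
    · interval_cases n <;> omega
    · have := ih h
      have : 2^n ≤ 2^(n+1) := by rw [pow_succ]; omega
      omega

lemma hqc_d4 {k : ℕ} (h3 : 3 ≤ k) (h4 : k ≠ 4) : D4 (hqc k) := by
  set v := k.factorization 2 with hv
  have hdv : 2^v ∣ k := Nat.ordProj_dvd k 2
  have hk0 : k ≠ 0 := by omega
  have hvk : v + 3 ≤ k := by
    rcases le_or_gt v 2 with hv2 | hv2
    · rcases Nat.lt_or_ge k 5 with h5 | h5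
      · have hk3 : k = 3 := by omega
        have hv0 : v = 0 := by
          rw [hv, hk3]
          exact Nat.factorization_eq_zero_of_not_dvd (by decide)
        omega
      · omega
    · have h2v : 2^v ≤ k := Nat.le_of_dvd (by omega) hdv
      have := pow_ge_add_three v (by omega)
      omega
  set u := k / 2^v with hu
  have hku : 2^v * u = k := Nat.ordProj_mul_ordCompl_eq_self k 2
  have hu2 : ¬ ((2:ℕ) ∣ u) := Nat.not_dvd_ordCompl Nat.prime_two hk0
  refine ⟨(-1:ℚ)^(k+1) * 2^(k-1) / (4 * k), ?_, ?_⟩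
  · refine ⟨(-1)^(k+1) * 2^(k-v-3), (u:ℤ), ?_, ?_⟩
    · intro hd
      exact hu2 (by exact_mod_cast hd)
    · have hk0' : (k:ℚ) ≠ 0 := by positivity
      push_cast
      rw [div_mul_eq_mul_div, div_eq_iff (by positivity)]
      have hkq : (k:ℚ) = 2^v * u := by exact_mod_cast hku.symm
      have he : (2:ℚ)^((k-1:ℕ)) = 2^((k-v-3:ℕ)) * 2^v * 4 := by
        have e : (2:ℚ)^((k-1:ℕ)) = 2^((k-v-3) + v + 2 : ℕ) := by congr 1; omega
        rw [e, pow_add, pow_add]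
        norm_num
      rw [he, hkq]
      ring
  · unfold hqc
    field_simp

lemma isI_rZ (j : ℕ) (t : ℤ) (h : D4 (rZ j t - ((tgtZ j t : ℤ) : ℚ))) : IsI (rZ j t) := by
  have h1 := isI_of_d4 h
  have h2 := isI_intCast (tgtZ j t)
  have := isI_add h1 h2
  simpa using this

lemma hCong : ∀ (j : ℕ) (t : ℤ), D4 (rZ j t - ((tgtZ j t : ℤ) : ℚ)) := by
  intro j
  induction j with
  | zero =>
    intro t
    rcases lt_or_ge t 0 with h | h
    · rw [rZ_neg h]
      unfold tgtZ
      rw [chiZ_neg (by omega : t - (0:ℕ) < 0), chiZ_neg (by omega : t - (0:ℕ) - 3 < 0)]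
      simpa using d4_zero
    · obtain ⟨n, rfl⟩ : ∃ n : ℕ, t = (n:ℤ) := ⟨t.toNat, by omega⟩
      rw [rZ_ofNat]
      unfold Acoef tgtZ
      rw [pow_zero]
      rcases n with _ | n
      · simp [chiZ, eps]
        exact d4_zero
      · have hc : PowerSeries.coeff (n+1) (1 : ℚ⟦X⟧) = 0 := by
          rw [PowerSeries.coeff_one]; simp
        rw [hc, mul_zero]
        have h1 : chiZ 0 (((n+1:ℕ):ℤ) - (0:ℕ)) = 0 := by
          have : (((n+1:ℕ):ℤ) - (0:ℕ)) = ((n+1:ℕ):ℤ) := by push_cast; ring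
          rw [this, chiZ_ofNat]
          simp [Nat.choose]
        have h2 : chiZ (0-1) (((n+1:ℕ):ℤ) - (0:ℕ) - 3) = chiZ 0 (((n+1:ℕ):ℤ) - 3) := by
          norm_num
        rw [h1]
        simpa using d4_zero
  | succ j ih =>
    intro t
    rcases lt_or_ge t 0 with h | h
    · rw [rZ_neg h]
      unfold tgtZ
      rw [chiZ_neg (by push_cast; omega), chiZ_neg (by push_cast; omega)]
      simpa using d4_zero
    · obtain ⟨n, rfl⟩ : ∃ n : ℕ, t = (n:ℤ) := ⟨t.toNat, by omega⟩
      have hconv := rZ_conv j n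
      have hsub : ({1,2,4} : Finset ℕ) ⊆ Finset.Icc 1 (n+4) := by
        intro x hx
        simp only [Finset.mem_insert, Finset.mem_singleton] at hx
        simp only [Finset.mem_Icc]
        rcases hx with rfl | rfl | rfl <;> omega
      have hsplit := Finset.sum_sdiff (f := fun k => hqc k * rZ j ((n:ℤ) - k)) hsub
      have h124 : ∑ k ∈ ({1,2,4} : Finset ℕ), hqc k * rZ j ((n:ℤ) - k)
          = rZ j ((n:ℤ)-1) - rZ j ((n:ℤ)-2) - 2 * rZ j ((n:ℤ)-4) := by
        rw [Finset.sum_insert (by decide), Finset.sum_insert (by decide),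
          Finset.sum_singleton, hqc_one, hqc_two, hqc_four]
        push_cast
        ring
      obtain ⟨w, hw⟩ := step_int j (n:ℤ)
      have hwq : ((tgtZ j ((n:ℤ)-1) : ℤ) : ℚ) - ((tgtZ j ((n:ℤ)-2) : ℤ) : ℚ)
          - 2 * ((tgtZ j ((n:ℤ)-4) : ℤ) : ℚ) - ((tgtZ (j+1) (n:ℤ) : ℤ) : ℚ) = 4 * (w:ℚ) := by
        exact_mod_cast congrArg (fun z : ℤ => (z : ℚ)) hw
      have key : rZ (j+1) (n:ℤ) - ((tgtZ (j+1) (n:ℤ) : ℤ) : ℚ)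
          = (∑ k ∈ Finset.Icc 1 (n+4) \ ({1,2,4} : Finset ℕ), hqc k * rZ j ((n:ℤ) - k))
            + (rZ j ((n:ℤ)-1) - ((tgtZ j ((n:ℤ)-1) : ℤ) : ℚ))
            - (rZ j ((n:ℤ)-2) - ((tgtZ j ((n:ℤ)-2) : ℤ) : ℚ))
            - 2 * (rZ j ((n:ℤ)-4) - ((tgtZ j ((n:ℤ)-4) : ℤ) : ℚ))
            + 4 * (w:ℚ) := by
        linear_combination hconv - hsplit + h124 + hwq
      rw [key]
      have hrest : D4 (∑ k ∈ Finset.Icc 1 (n+4) \ ({1,2,4} : Finset ℕ),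
          hqc k * rZ j ((n:ℤ) - k)) := by
        apply d4_sum
        intro k hk
        simp only [Finset.mem_sdiff, Finset.mem_Icc, Finset.mem_insert,
          Finset.mem_singleton] at hk
        push_neg at hk
        obtain ⟨⟨hk1, _⟩, hk2, hk3, hk4⟩ := hk
        exact d4_mul_isI (hqc_d4 (by omega) hk4) (isI_rZ j _ (ih _))
      have h2mul : D4 (2 * (rZ j ((n:ℤ)-4) - ((tgtZ j ((n:ℤ)-4) : ℤ) : ℚ))) := by
        have := d4_mul_isI (ih ((n:ℤ)-4)) (isI_intCast 2)
        simpa [mul_comm] using this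
      exact d4_add (d4_sub (d4_sub (d4_add hrest (ih _)) (ih _)) h2mul)
        ⟨(w:ℚ), isI_intCast w, rfl⟩
lemma cong4_of_d4 {r s : ℚ} (h : D4 (r - s)) : cong4 r s := by
  obtain ⟨y, hy, hrs⟩ := h
  by_cases h0 : r = s
  · exact Or.inl h0
  · right
    have hy0 : y ≠ 0 := by
      intro h; rw [h] at hrs; exact h0 (by linarith [sub_eq_zero.mp (by linarith [hrs] : r - s = 0)])
    have h4 : (4 : ℚ) = (2:ℚ) * 2 := by norm_num
    have h20 : (2:ℚ) ≠ 0 := by norm_num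
    have h2y : (2:ℚ) * y ≠ 0 := mul_ne_zero h20 hy0
    have hv2 : padicValRat 2 ((2:ℕ):ℚ) = 1 := padicValRat.self (by norm_num)
    have hv2' : padicValRat 2 (2:ℚ) = 1 := by exact_mod_cast hv2
    have : padicValRat 2 (r - s) = 1 + (1 + padicValRat 2 y) := by
      rw [hrs, h4, mul_assoc, padicValRat.mul h20 h2y, padicValRat.mul h20 hy0, hv2']
    rw [this]
    have := padicValRat_nonneg_of_isI hy hy0
    omega

theorem stmt19 (j m : ℕ) (h1 : 1 ≤ j) (h2 : j ≤ m) :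
    cong4 (((2 : ℚ) ^ (m - j) * (j.factorial : ℚ) * (bcoef j m : ℚ)) / (m.factorial : ℚ))
      ((Nat.choose j (m - j) : ℚ) + 2 * (ccoef j m : ℚ)) := by
  apply cong4_of_d4
  obtain ⟨m', rfl⟩ : ∃ m', m = m' + 1 := ⟨m - 1, by omega⟩
  -- Step 1: rewrite the LHS as rZ j m + 2 * rZ j (m-1)
  have hm0 : ((m'+1).factorial : ℚ) ≠ 0 := by positivity
  have hmas := master (m'+1) j
  have hlhs : ((2 : ℚ) ^ (m'+1 - j) * (j.factorial : ℚ) * (bcoef j (m'+1) : ℚ)) / ((m'+1).factorial : ℚ)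
      = (2:ℚ)^(m'+1-j) * cf j (m'+1) := by
    rw [div_eq_iff hm0]
    calc (2 : ℚ) ^ (m'+1 - j) * (j.factorial : ℚ) * (bcoef j (m'+1) : ℚ)
        = (2:ℚ)^(m'+1-j) * ((j.factorial : ℚ) * (bcoef j (m'+1) : ℚ)) := by ring
      _ = (2:ℚ)^(m'+1-j) * (((m'+1).factorial : ℚ) * cf j (m'+1)) := by rw [hmas]
      _ = (2:ℚ)^(m'+1-j) * cf j (m'+1) * ((m'+1).factorial : ℚ) := by ring
  rw [hlhs, cf_eq_Acoef]
  have hz1 : (2:ℚ)^(m'+1-j) * Acoef j (m'+1) = rZ j ((m'+1:ℕ):ℤ) := by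
    rw [rZ_ofNat]
    congr 1
    rw [show ((m'+1:ℕ):ℤ) - (j:ℤ) = ((m'+1-j : ℕ):ℤ) by omega, zpow_natCast]
  have hz2 : (2:ℚ)^(m'+1-j) * Acoef j m' = 2 * rZ j (((m'+1:ℕ):ℤ) - 1) := by
    rcases Nat.lt_or_ge m' j with hc | hc
    · -- then m' < j, both sides zero
      rw [Acoef_eq_zero hc, mul_zero]
      have : (((m'+1:ℕ):ℤ) - 1) = (m' : ℤ) := by push_cast; ring
      rw [this, rZ_ofNat, Acoef_eq_zero hc, mul_zero, mul_zero]
    · have e : (((m'+1:ℕ):ℤ) - 1) = ((m' : ℕ) : ℤ) := by push_cast; ring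
      rw [e, rZ_ofNat]
      rw [show ((m':ℕ):ℤ) - (j:ℤ) = ((m'-j : ℕ):ℤ) by omega, zpow_natCast]
      rw [show m'+1-j = (m'-j)+1 by omega, pow_succ]
      ring
  rw [mul_add, hz1, hz2]
  -- Step 2: decompose into D4 pieces
  have hc1 := hCong j ((m'+1:ℕ):ℤ)
  have hc2 := hCong j (((m'+1:ℕ):ℤ) - 1)
  obtain ⟨w, hw⟩ := final_int j (m'+1) h1 h2
  have hwq : ((tgtZ j ((m'+1:ℕ):ℤ) : ℤ) : ℚ) + 2 * ((tgtZ j (((m'+1:ℕ):ℤ)-1) : ℤ) : ℚ)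
      - ((Nat.choose j (m'+1-j) : ℕ) : ℚ) - 2 * ((ccoef j (m'+1) : ℕ) : ℚ) = 4 * (w:ℚ) := by
    have := congrArg (fun z : ℤ => (z : ℚ)) hw
    push_cast at this ⊢
    linarith
  have key : rZ j ((m'+1:ℕ):ℤ) + 2 * rZ j (((m'+1:ℕ):ℤ) - 1)
      - (((Nat.choose j (m'+1-j) : ℕ) : ℚ) + 2 * ((ccoef j (m'+1) : ℕ) : ℚ))
      = (rZ j ((m'+1:ℕ):ℤ) - ((tgtZ j ((m'+1:ℕ):ℤ) : ℤ) : ℚ))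
        + 2 * (rZ j (((m'+1:ℕ):ℤ)-1) - ((tgtZ j (((m'+1:ℕ):ℤ)-1) : ℤ) : ℚ))
        + 4 * (w:ℚ) := by
    linear_combination hwq
  rw [key]
  have h2mul : D4 (2 * (rZ j (((m'+1:ℕ):ℤ)-1) - ((tgtZ j (((m'+1:ℕ):ℤ)-1) : ℤ) : ℚ))) := by
    have := d4_mul_isI hc2 (isI_intCast 2)
    simpa [mul_comm] using this
  exact d4_add (d4_add hc1 h2mul) ⟨(w:ℚ), isI_intCast w, rfl⟩
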